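/- arXiv:1302.0196 — 2 statements merged into one kernel-verified Lean document; each statement's English description precedes it below -/
import Mathlib

section
/- If the residual component satisfies (b - A p_{i-1}, e_i)² ≥ ‖b - A p_{i-1}‖²/N, then ‖x - p_i‖² ≤ (1 − 1/(N κ(AAᵀ))) ‖x - p_{i-1}‖², where κ(AAᵀ) is the spectral condition number of AAᵀ and p_i is the Kaczmarz update using row i. -/
open Matrix

variable {N : ℕ}

section Helpers

variable {M : Matrix (Fin N) (Fin N) ℝ} (hM : M.IsHermitian)

private noncomputable def Umat (hM : M.IsHermitian) : Matrix (Fin N) (Fin N) ℝ :=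
  (hM.eigenvectorUnitary : Matrix (Fin N) (Fin N) ℝ)

private lemma dotA (B : Matrix (Fin N) (Fin N) ℝ) (u t : Fin N → ℝ) :
    u ⬝ᵥ (B *ᵥ t) = (Bᵀ *ᵥ u) ⬝ᵥ t := by
  rw [dotProduct_mulVec, mulVec_transpose]

private lemma U_mul_Ut : Umat hM * (Umat hM)ᵀ = 1 := by
  have := mem_unitaryGroup_iff.mp hM.eigenvectorUnitary.2
  rwa [star_eq_conjTranspose, conjTranspose_eq_transpose_of_trivial] at this

private lemma Ut_mul_U : (Umat hM)ᵀ * Umat hM = 1 := by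
  have := mem_unitaryGroup_iff'.mp hM.eigenvectorUnitary.2
  rwa [star_eq_conjTranspose, conjTranspose_eq_transpose_of_trivial] at this

private lemma spectralR : M = Umat hM * diagonal hM.eigenvalues * (Umat hM)ᵀ := by
  have := hM.spectral_theorem
  simpa [Umat, star_eq_conjTranspose, conjTranspose_eq_transpose_of_trivial,
    Function.comp] using this

private lemma S0 (w : Fin N → ℝ) :
    w ⬝ᵥ w = ∑ j, ((Umat hM)ᵀ *ᵥ w) j ^ 2 := by
  have h1 : ((Umat hM)ᵀ *ᵥ w) ⬝ᵥ ((Umat hM)ᵀ *ᵥ w)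
      = (((Umat hM)ᵀ)ᵀ *ᵥ ((Umat hM)ᵀ *ᵥ w)) ⬝ᵥ w := dotA _ _ _
  rw [transpose_transpose, mulVec_mulVec, U_mul_Ut hM, one_mulVec] at h1
  rw [← h1]
  simp [dotProduct, sq]

private lemma S1 (w : Fin N → ℝ) :
    w ⬝ᵥ (M *ᵥ w) = ∑ j, hM.eigenvalues j * ((Umat hM)ᵀ *ᵥ w) j ^ 2 := by
  conv_lhs => rw [spectralR hM]
  rw [show (Umat hM * diagonal hM.eigenvalues * (Umat hM)ᵀ) *ᵥ w
      = Umat hM *ᵥ (diagonal hM.eigenvalues *ᵥ ((Umat hM)ᵀ *ᵥ w)) by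
    simp [mulVec_mulVec, Matrix.mul_assoc]]
  rw [dotA]
  simp only [dotProduct, mulVec_diagonal]
  exact Finset.sum_congr rfl fun j _ => by ring

private lemma S2 (w : Fin N → ℝ) :
    (M *ᵥ w) ⬝ᵥ (M *ᵥ w) = ∑ j, hM.eigenvalues j ^ 2 * ((Umat hM)ᵀ *ᵥ w) j ^ 2 := by
  have hMw : M *ᵥ w = Umat hM *ᵥ (diagonal hM.eigenvalues *ᵥ ((Umat hM)ᵀ *ᵥ w)) := by
    conv_lhs => rw [spectralR hM]
    simp [mulVec_mulVec, Matrix.mul_assoc]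
  rw [hMw, dotA, mulVec_mulVec, Ut_mul_U hM, one_mulVec]
  simp only [dotProduct, mulVec_diagonal]
  exact Finset.sum_congr rfl fun j _ => by ring

end Helpers

section Bounds

variable {M : Matrix (Fin N) (Fin N) ℝ} (hM : M.IsHermitian)

private lemma Qmax (v : Fin N → ℝ) (hnn : ∀ j, 0 ≤ hM.eigenvalues j) :
    v ⬝ᵥ (M *ᵥ v) ≤ (⨆ j, hM.eigenvalues j) * (v ⬝ᵥ v) := by
  cases isEmpty_or_nonempty (Fin N) with
  | inl h => simp [dotProduct, Finset.sum_of_isEmpty]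
  | inr h =>
    rw [S1 hM, S0 hM, Finset.mul_sum]
    refine Finset.sum_le_sum fun j _ => ?_
    exact mul_le_mul_of_nonneg_right (le_ciSup (Set.finite_range _).bddAbove j) (sq_nonneg _)

private lemma Qmin2 (w : Fin N → ℝ) (hnn : ∀ j, 0 ≤ hM.eigenvalues j) :
    (⨅ j, hM.eigenvalues j) * (w ⬝ᵥ (M *ᵥ w)) ≤ (M *ᵥ w) ⬝ᵥ (M *ᵥ w) := by
  cases isEmpty_or_nonempty (Fin N) with
  | inl h => simp [dotProduct, Finset.sum_of_isEmpty]
  | inr h =>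
    rw [S1 hM, S2 hM, Finset.mul_sum]
    refine Finset.sum_le_sum fun j _ => ?_
    have h1 : (⨅ k, hM.eigenvalues k) ≤ hM.eigenvalues j :=
      ciInf_le (Set.finite_range _).bddBelow j
    have h2 := hnn j
    nlinarith [mul_nonneg (mul_nonneg (sub_nonneg.mpr h1) h2)
      (sq_nonneg (((Umat hM)ᵀ *ᵥ w) j))]

end Bounds

open Matrix

/-- Conditional contraction estimate for one Kaczmarz step, with the spectral
condition number κ(AAᵀ) = λ_max(AAᵀ)/λ_min(AAᵀ). -/
theorem kaczmarz_step_conditional_contraction {N : ℕ} (A : Matrix (Fin N) (Fin N) ℝ)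
    (hA : IsUnit A) (hrows : ∀ j : Fin N, Aᵀ *ᵥ Pi.single j 1 ≠ 0)
    (hH : (A * Aᵀ).IsHermitian)
    (b x p : Fin N → ℝ) (hx : A *ᵥ x = b) (i : Fin N)
    (p' : Fin N → ℝ)
    (hp' : p' = p + (((b - A *ᵥ p) ⬝ᵥ Pi.single i 1) /
      ((Aᵀ *ᵥ Pi.single i 1) ⬝ᵥ (Aᵀ *ᵥ Pi.single i 1))) • (Aᵀ *ᵥ Pi.single i 1))
    (hres : ((b - A *ᵥ p) ⬝ᵥ Pi.single i 1) ^ 2 ≥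
      ((b - A *ᵥ p) ⬝ᵥ (b - A *ᵥ p)) / N) :
    (x - p') ⬝ᵥ (x - p') ≤
      (1 - 1 / (N * ((⨆ j, hH.eigenvalues j) / (⨅ j, hH.eigenvalues j)))) *
        ((x - p) ⬝ᵥ (x - p)) := by
  classical
  set e : Fin N → ℝ := Pi.single i 1 with he
  set y : Fin N → ℝ := x - p with hy
  set z : Fin N → ℝ := b - A *ᵥ p with hzdef
  set a : Fin N → ℝ := Aᵀ *ᵥ e with ha
  set c : ℝ := z ⬝ᵥ e with hc
  set s : ℝ := a ⬝ᵥ a with hs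
  -- basics
  have hdet : IsUnit A.det := (isUnit_iff_isUnit_det A).mp hA
  have hdetT : IsUnit Aᵀ.det := by
    rw [Matrix.det_transpose]; exact hdet
  have hz : z = A *ᵥ y := by
    rw [hzdef, hy, mulVec_sub, hx]
  -- positivity of M = A * Aᵀ
  have hPD : (A * Aᵀ).PosDef := by
    refine Matrix.PosDef.of_dotProduct_mulVec_pos hH fun v hv => ?_
    have hAv : Aᵀ *ᵥ v ≠ 0 := by
      intro h0
      apply hv
      have := congrArg (fun u => (Aᵀ)⁻¹ *ᵥ u) h0
      simpa [mulVec_mulVec, Matrix.nonsing_inv_mul Aᵀ hdetT] using this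
    have key : star v ⬝ᵥ ((A * Aᵀ) *ᵥ v) = (Aᵀ *ᵥ v) ⬝ᵥ (Aᵀ *ᵥ v) := by
      rw [star_trivial, ← mulVec_mulVec, dotA]
    rw [key]
    have h0 : 0 ≤ (Aᵀ *ᵥ v) ⬝ᵥ (Aᵀ *ᵥ v) := Finset.sum_nonneg fun j _ => mul_self_nonneg _
    rcases h0.lt_or_eq with h1 | h1
    · exact h1
    · exact absurd (dotProduct_self_eq_zero.mp h1.symm) hAv
  have heigpos : ∀ j, 0 < hH.eigenvalues j := fun j => hPD.eigenvalues_pos j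
  have : Nonempty (Fin N) := ⟨i⟩
  set lam0 : ℝ := ⨅ j, hH.eigenvalues j with hlam0
  set lam1 : ℝ := ⨆ j, hH.eigenvalues j with hlam1
  have hlam0pos : 0 < lam0 := by
    obtain ⟨j, hj⟩ := exists_eq_ciInf_of_finite (f := hH.eigenvalues)
    rw [hlam0, ← hj]; exact heigpos j
  have hlam01 : lam0 ≤ lam1 := by
    calc lam0 ≤ hH.eigenvalues i := ciInf_le (Set.finite_range _).bddBelow i
    _ ≤ lam1 := le_ciSup (Set.finite_range _).bddAbove i
  have hlam1pos : 0 < lam1 := lt_of_lt_of_le hlam0pos hlam01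
  have hNpos : (0:ℝ) < N := by exact_mod_cast Fin.pos i
  -- s > 0
  have hspos : 0 < s := by
    have h0 : 0 ≤ a ⬝ᵥ a := Finset.sum_nonneg fun j _ => mul_self_nonneg _
    rcases h0.lt_or_eq with h1 | h1
    · exact h1
    · exact absurd (dotProduct_self_eq_zero.mp h1.symm) (hrows i)
  -- w with Aᵀ w = y
  set w : Fin N → ℝ := (Aᵀ)⁻¹ *ᵥ y with hw
  have hAtw : Aᵀ *ᵥ w = y := by
    rw [hw, mulVec_mulVec, Matrix.mul_nonsing_inv Aᵀ hdetT, one_mulVec]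
  have hy2 : y ⬝ᵥ y = w ⬝ᵥ ((A * Aᵀ) *ᵥ w) := by
    conv_lhs => rw [← hAtw]
    rw [dotA, transpose_transpose, mulVec_mulVec, dotProduct_comm]
  have hz2 : z ⬝ᵥ z = ((A * Aᵀ) *ᵥ w) ⬝ᵥ ((A * Aᵀ) *ᵥ w) := by
    rw [hz, ← hAtw, mulVec_mulVec]
  -- key bounds
  have hZY : lam0 * (y ⬝ᵥ y) ≤ z ⬝ᵥ z := by
    rw [hy2, hz2]; exact Qmin2 hH w (fun j => (heigpos j).le)
  have hsum : s = e ⬝ᵥ ((A * Aᵀ) *ᵥ e) := by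
    rw [hs, ha, dotA, transpose_transpose, mulVec_mulVec, dotProduct_comm]
  have hee : e ⬝ᵥ e = 1 := by simp [he, dotProduct, Pi.single_apply]
  have hsle : s ≤ lam1 := by
    have := Qmax hH e (fun j => (heigpos j).le)
    rw [← hsum, hee, mul_one] at this
    exact this
  -- y ⬝ᵥ a = c
  have hya : y ⬝ᵥ a = c := by
    rw [ha, dotA, transpose_transpose, hc, hz]
  -- LHS value
  have hY0 : 0 ≤ y ⬝ᵥ y := Finset.sum_nonneg fun j _ => mul_self_nonneg _
  have hxp' : x - p' = y - (c / s) • a := by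
    rw [hp', hy]; ext j; simp [hc, hs, hzdef, ha, he]; ring
  have hLHS : (x - p') ⬝ᵥ (x - p') = y ⬝ᵥ y - c ^ 2 / s := by
    rw [hxp']
    simp only [sub_dotProduct, dotProduct_sub, smul_dotProduct, dotProduct_smul,
      smul_eq_mul, Pi.smul_apply]
    rw [dotProduct_comm a y, hya, ← hs]
    field_simp
    ring
  rw [hLHS]
  -- chain of inequalities
  have hcc : c ^ 2 ≥ (z ⬝ᵥ z) / N := hres
  have hstep : lam0 * (y ⬝ᵥ y) / (N * lam1) ≤ c ^ 2 / s := by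
    have h1 : lam0 * (y ⬝ᵥ y) / N ≤ c ^ 2 := by
      calc lam0 * (y ⬝ᵥ y) / N ≤ (z ⬝ᵥ z) / N := by
            exact div_le_div_of_nonneg_right hZY hNpos.le
          _ ≤ c ^ 2 := hcc
    calc lam0 * (y ⬝ᵥ y) / (N * lam1) = (lam0 * (y ⬝ᵥ y) / N) / lam1 := (div_div _ _ _).symm
      _ ≤ (lam0 * (y ⬝ᵥ y) / N) / s := by
          apply div_le_div_of_nonneg_left _ hspos hsle
          positivity
      _ ≤ c ^ 2 / s := by
          exact div_le_div_of_nonneg_right h1 hspos.le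
  have hkappa : 1 / ((N : ℝ) * (lam1 / lam0)) = lam0 / (N * lam1) := by
    field_simp
  rw [hkappa]
  have : (1 - lam0 / (N * lam1)) * (y ⬝ᵥ y) = y ⬝ᵥ y - lam0 * (y ⬝ᵥ y) / (N * lam1) := by
    ring
  rw [this]
  linarith [hstep]
end

section
/- One full cycle of Kaczmarz's method satisfies the contraction estimate ‖x − x_{n+1}‖² ≤ (1 − (det A)²/∏_{i=1}^N ‖Aᵀe_i‖²) ‖x − x_n‖², i.e., the cycle matrix Q = Q_N ⋯ Q_1 of orthogonal rank-(N−1) projections satisfies ‖Q‖² ≤ 1 − (det A)²/∏_{i=1}^N ‖Aᵀe_i‖². -/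
open Matrix
open scoped RealInnerProductSpace

/- ## Auxiliary lemmas -/

lemma aux_dot_inner {N : ℕ} (x y : EuclideanSpace ℝ (Fin N)) :
    ⟪x, y⟫ = (WithLp.equiv 2 _ x) ⬝ᵥ (WithLp.equiv 2 _ y) := by
  simp [PiLp.inner_apply, dotProduct, mul_comm]

lemma aux_dot_self_nonneg' {N : ℕ} (x : Fin N → ℝ) : 0 ≤ x ⬝ᵥ x :=
  Finset.sum_nonneg fun _ _ => mul_self_nonneg _

lemma aux_dot_self_pos {N : ℕ} (x : Fin N → ℝ) (hx : x ≠ 0) : 0 < x ⬝ᵥ x := by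
  rcases (aux_dot_self_nonneg' x).lt_or_eq with h | h
  · exact h
  exfalso
  apply hx
  funext i
  have h0 : ∀ j ∈ Finset.univ, 0 ≤ x j * x j := fun j _ => mul_self_nonneg _
  have hz := (Finset.sum_eq_zero_iff_of_nonneg h0).1 h.symm i (Finset.mem_univ i)
  simpa using mul_self_eq_zero.1 hz

lemma aux_dot_sum {N : ℕ} {ι : Type*} (s : Finset ι) (x : Fin N → ℝ) (f : ι → Fin N → ℝ) :
    x ⬝ᵥ (∑ i ∈ s, f i) = ∑ i ∈ s, x ⬝ᵥ f i := by
  simp only [dotProduct, Finset.sum_apply, Finset.mul_sum]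
  exact Finset.sum_comm

lemma aux_cs {N : ℕ} (x y : Fin N → ℝ) : (x ⬝ᵥ y) ^ 2 ≤ (x ⬝ᵥ x) * (y ⬝ᵥ y) := by
  have h := real_inner_mul_inner_self_le ((WithLp.equiv 2 (Fin N → ℝ)).symm x)
    ((WithLp.equiv 2 (Fin N → ℝ)).symm y)
  rw [aux_dot_inner, aux_dot_inner, aux_dot_inner] at h
  simp only [Equiv.apply_symm_apply] at h
  nlinarith [h]

lemma aux_dot_mul' {N : ℕ} (A : Matrix (Fin N) (Fin N) ℝ) (x : Fin N → ℝ) :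
    (A *ᵥ x) ⬝ᵥ (A *ᵥ x) = x ⬝ᵥ ((Aᵀ * A) *ᵥ x) := by
  conv_rhs => rw [← Matrix.mulVec_mulVec, Matrix.dotProduct_mulVec, Matrix.vecMul_transpose]

lemma aux_op_le {N : ℕ} (M : Matrix (Fin N) (Fin N) ℝ)
    (hMt : ∀ y : Fin N → ℝ, (Mᵀ *ᵥ y) ⬝ᵥ (Mᵀ *ᵥ y) ≤ y ⬝ᵥ y) :
    ∀ x : Fin N → ℝ, (M *ᵥ x) ⬝ᵥ (M *ᵥ x) ≤ x ⬝ᵥ x := by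
  intro x
  have h1 : (M *ᵥ x) ⬝ᵥ (M *ᵥ x) = x ⬝ᵥ (Mᵀ *ᵥ (M *ᵥ x)) := by
    rw [aux_dot_mul', ← Matrix.mulVec_mulVec]
  have h2 : (x ⬝ᵥ (Mᵀ *ᵥ (M *ᵥ x))) ^ 2 ≤
      (x ⬝ᵥ x) * ((Mᵀ *ᵥ (M *ᵥ x)) ⬝ᵥ (Mᵀ *ᵥ (M *ᵥ x))) := aux_cs _ _
  have h3 := hMt (M *ᵥ x)
  have h4 := aux_dot_self_nonneg' (M *ᵥ x)
  have h5 := aux_dot_self_nonneg' x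
  nlinarith [h1, h2, h3, h4, h5]

lemma aux_spectral {N : ℕ} (M : Matrix (Fin N) (Fin N) ℝ)
    (hM : ∀ x : Fin N → ℝ, (M *ᵥ x) ⬝ᵥ (M *ᵥ x) ≤ x ⬝ᵥ x) (v : Fin N → ℝ) :
    M.det ^ 2 * (v ⬝ᵥ v) ≤ (M *ᵥ v) ⬝ᵥ (M *ᵥ v) := by
  have hS : (Mᵀ * M).IsHermitian := by
    simpa [conjTranspose_eq_transpose_of_trivial] using isHermitian_conjTranspose_mul_self M
  set S := Mᵀ * M with hSdef
  have hSsymm : Sᵀ = S := by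
    simpa [conjTranspose_eq_transpose_of_trivial] using hS.eq
  have hquad : ∀ x : Fin N → ℝ, x ⬝ᵥ (S *ᵥ x) = (M *ᵥ x) ⬝ᵥ (M *ᵥ x) := by
    intro x
    rw [hSdef, ← Matrix.mulVec_mulVec, Matrix.dotProduct_mulVec, Matrix.vecMul_transpose]
  set b := hS.eigenvectorBasis with hb
  set μ := hS.eigenvalues with hμ
  have hmv : ∀ i, S *ᵥ (WithLp.equiv 2 _ (b i)) = μ i • (WithLp.equiv 2 _ (b i)) :=
    hS.mulVec_eigenvectorBasis
  have hbi : ∀ i, (WithLp.equiv 2 _ (b i)) ⬝ᵥ (WithLp.equiv 2 _ (b i)) = 1 := by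
    intro i
    rw [← aux_dot_inner, real_inner_self_eq_norm_sq, b.orthonormal.1 i, one_pow]
  have hμval : ∀ i, (WithLp.equiv 2 _ (b i)) ⬝ᵥ (S *ᵥ (WithLp.equiv 2 _ (b i))) = μ i := by
    intro i
    rw [hmv i, dotProduct_smul, hbi i, smul_eq_mul, mul_one]
  have hμ0 : ∀ i, 0 ≤ μ i := by
    intro i
    rw [← hμval i, hquad]
    exact aux_dot_self_nonneg' _
  have hμ1 : ∀ i, μ i ≤ 1 := by
    intro i
    rw [← hμval i, hquad]
    calc (M *ᵥ _) ⬝ᵥ (M *ᵥ _) ≤ _ := hM _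
    _ = 1 := hbi i
  have key : ∀ x : Fin N → ℝ,
      x ⬝ᵥ (S *ᵥ x) = ∑ i, μ i * ((WithLp.equiv 2 _ (b i)) ⬝ᵥ x) ^ 2 ∧
      x ⬝ᵥ x = ∑ i, ((WithLp.equiv 2 _ (b i)) ⬝ᵥ x) ^ 2 := by
    intro x
    set xE : EuclideanSpace ℝ (Fin N) := (WithLp.equiv 2 _).symm x with hxE
    have h1 := b.sum_inner_mul_inner xE ((WithLp.equiv 2 _).symm (S *ᵥ x))
    have h2 := b.sum_inner_mul_inner xE xE
    have hbSx : ∀ i, ⟪b i, (WithLp.equiv 2 _).symm (S *ᵥ x)⟫ =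
        μ i * ((WithLp.equiv 2 _ (b i)) ⬝ᵥ x) := by
      intro i
      rw [aux_dot_inner]
      simp only [Equiv.apply_symm_apply]
      rw [Matrix.dotProduct_mulVec]
      have hvm : (WithLp.equiv 2 _ (b i)) ᵥ* S = μ i • (WithLp.equiv 2 _ (b i)) := by
        rw [← hSsymm, Matrix.vecMul_transpose]
        exact hmv i
      rw [hvm, smul_dotProduct, smul_eq_mul]
    have hxbx : ∀ i, ⟪xE, b i⟫ = (WithLp.equiv 2 _ (b i)) ⬝ᵥ x := by
      intro i
      rw [real_inner_comm, aux_dot_inner]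
      simp only [hxE, Equiv.apply_symm_apply]
    have hbx : ∀ i, ⟪b i, xE⟫ = (WithLp.equiv 2 _ (b i)) ⬝ᵥ x := by
      intro i
      rw [aux_dot_inner]
      simp only [hxE, Equiv.apply_symm_apply]
    have gl1 : x ⬝ᵥ (S *ᵥ x) = ⟪xE, (WithLp.equiv 2 _).symm (S *ᵥ x)⟫ := by
      rw [aux_dot_inner]
      simp only [hxE, Equiv.apply_symm_apply]
    have gl2 : x ⬝ᵥ x = ⟪xE, xE⟫ := by
      rw [aux_dot_inner]
      simp only [hxE, Equiv.apply_symm_apply]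
    constructor
    · rw [gl1, ← h1]
      refine Finset.sum_congr rfl fun i _ => ?_
      rw [hbSx i, hxbx i]; ring
    · rw [gl2, ← h2]
      refine Finset.sum_congr rfl fun i _ => ?_
      rw [hxbx i, hbx i]; ring
  have hdet : M.det ^ 2 = ∏ i, μ i := by
    have h := hS.det_eq_prod_eigenvalues
    simp only [hSdef] at h
    rw [det_mul, det_transpose] at h
    rw [sq]
    simpa using h
  have hprodle : ∀ i, ∏ j, μ j ≤ μ i := by
    intro i
    rw [← Finset.mul_prod_erase Finset.univ μ (Finset.mem_univ i)]
    calc μ i * ∏ j ∈ Finset.univ.erase i, μ j ≤ μ i * 1 :=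
          mul_le_mul_of_nonneg_left
            (Finset.prod_le_one (fun j _ => hμ0 j) (fun j _ => hμ1 j)) (hμ0 i)
    _ = μ i := mul_one _
  obtain ⟨e1, e2⟩ := key v
  rw [← hquad v, e1, hdet, e2, Finset.mul_sum]
  refine Finset.sum_le_sum fun i _ => ?_
  exact mul_le_mul_of_nonneg_right (hprodle i) (sq_nonneg _)

lemma aux_proj {N : ℕ} (u : Fin N → ℝ) (hu : u ⬝ᵥ u = 1) (w : Fin N → ℝ) :
    ((1 - vecMulVec u u) *ᵥ w) = w - (u ⬝ᵥ w) • u ∧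
    ((1 - vecMulVec u u) *ᵥ w) ⬝ᵥ ((1 - vecMulVec u u) *ᵥ w) = w ⬝ᵥ w - (u ⬝ᵥ w) ^ 2 := by
  have h1 : (vecMulVec u u) *ᵥ w = (u ⬝ᵥ w) • u := by
    funext i
    simp only [mulVec, dotProduct, vecMulVec_apply, Pi.smul_apply, smul_eq_mul]
    rw [Finset.sum_mul]
    exact Finset.sum_congr rfl fun j _ => by ring
  have hm : (1 - vecMulVec u u) *ᵥ w = w - (u ⬝ᵥ w) • u := by
    rw [Matrix.sub_mulVec, Matrix.one_mulVec, h1]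
  refine ⟨hm, ?_⟩
  rw [hm]
  simp only [dotProduct_sub, sub_dotProduct, dotProduct_smul, smul_dotProduct, smul_eq_mul, hu,
    dotProduct_comm w u]
  ring

section
variable {N : ℕ} (u : Fin N → Fin N → ℝ) (hu : ∀ i, u i ⬝ᵥ u i = 1)

include hu in
lemma aux_L_props :
    ∃ L B M : Matrix (Fin N) (Fin N) ℝ,
      (L = Matrix.of fun (i j : Fin N) =>
        if (j:ℕ) < (i:ℕ) then u i ⬝ᵥ u j else if j = i then 1 else 0) ∧
      (B = Matrix.of fun (i j : Fin N) => u i j) ∧ M = L⁻¹ * B ∧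
      IsUnit L.det ∧ M.det = B.det ∧
      (∀ y : Fin N → ℝ, (Mᵀ *ᵥ y) ⬝ᵥ (Mᵀ *ᵥ y) ≤ y ⬝ᵥ y) := by
  set L : Matrix (Fin N) (Fin N) ℝ :=
    Matrix.of fun (i j : Fin N) =>
      if (j:ℕ) < (i:ℕ) then u i ⬝ᵥ u j else if j = i then 1 else 0 with hL
  set B : Matrix (Fin N) (Fin N) ℝ := Matrix.of fun (i j : Fin N) => u i j with hB
  have hLtri : L.BlockTriangular OrderDual.toDual := by
    intro i j hij
    have h : (i:ℕ) < (j:ℕ) := hij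
    have hj_i : j ≠ i := by rintro rfl; omega
    simp only [hL, Matrix.of_apply]
    rw [if_neg (by omega), if_neg hj_i]
  have hdetL : L.det = 1 := by
    rw [Matrix.det_of_lowerTriangular L hLtri]
    refine Finset.prod_eq_one fun i _ => ?_
    simp [hL]
  have hLunit : IsUnit L.det := by rw [hdetL]; exact isUnit_one
  have hbb : ∀ i j, (B * Bᵀ) i j = u i ⬝ᵥ u j := by
    intro i j
    simp [hB, Matrix.mul_apply, dotProduct]
  have hGram : B * Bᵀ = L + Lᵀ - 1 := by
    ext i j
    rw [hbb]
    rcases lt_trichotomy (i : ℕ) (j : ℕ) with h | h | h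
    · have hj_i : j ≠ i := by rintro rfl; omega
      have hij' : i ≠ j := by rintro rfl; omega
      simp only [Matrix.sub_apply, Matrix.add_apply, Matrix.transpose_apply, hL,
        Matrix.of_apply, Matrix.one_apply]
      rw [if_neg (by omega : ¬((j:ℕ) < (i:ℕ))), if_neg hj_i, if_pos h, if_neg hij']
      rw [dotProduct_comm]
      ring
    · have hij : i = j := Fin.ext h
      subst hij
      simp only [Matrix.sub_apply, Matrix.add_apply, Matrix.transpose_apply, hL,
        Matrix.of_apply, Matrix.one_apply, lt_irrefl, if_false, if_pos rfl, hu i]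
      norm_num
    · have hj_i : j ≠ i := by rintro rfl; omega
      have hij' : i ≠ j := by rintro rfl; omega
      simp only [Matrix.sub_apply, Matrix.add_apply, Matrix.transpose_apply, hL,
        Matrix.of_apply, Matrix.one_apply]
      rw [if_pos h, if_neg (by omega : ¬((i:ℕ) < (j:ℕ))), if_neg hij']
      ring
  set M : Matrix (Fin N) (Fin N) ℝ := L⁻¹ * B with hM
  have hdetM : M.det = B.det := by
    rw [hM, Matrix.det_mul, Matrix.det_nonsing_inv, hdetL]
    simp
  have hMMT : M * Mᵀ = 1 - (1 - L⁻¹) * (1 - L⁻¹)ᵀ := by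
    have hLi' : L⁻¹ * L = 1 := Matrix.nonsing_inv_mul L hLunit
    have h1 : Mᵀ = Bᵀ * (L⁻¹)ᵀ := by rw [hM, Matrix.transpose_mul]
    rw [hM, h1]
    have hassoc : L⁻¹ * B * (Bᵀ * (L⁻¹)ᵀ) = L⁻¹ * (B * Bᵀ) * (L⁻¹)ᵀ := by
      noncomm_ring
    rw [hassoc, hGram]
    have expand : L⁻¹ * (L + Lᵀ - 1) * L⁻¹ᵀ =
        L⁻¹ * L * L⁻¹ᵀ + L⁻¹ * (Lᵀ * L⁻¹ᵀ) - L⁻¹ * L⁻¹ᵀ := by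
      noncomm_ring
    have hLT : Lᵀ * L⁻¹ᵀ = 1 := by
      rw [← Matrix.transpose_mul, hLi', Matrix.transpose_one]
    rw [expand, hLi', hLT, mul_one]
    have hK : (1 - L⁻¹) * (1 - L⁻¹)ᵀ = 1 - L⁻¹ᵀ - L⁻¹ + L⁻¹ * L⁻¹ᵀ := by
      rw [Matrix.transpose_sub, Matrix.transpose_one]
      noncomm_ring
    rw [hK]
    noncomm_ring
  refine ⟨L, B, M, rfl, rfl, rfl, hLunit, hdetM, ?_⟩
  intro y
  have h1 : (Mᵀ *ᵥ y) ⬝ᵥ (Mᵀ *ᵥ y) = y ⬝ᵥ ((M * Mᵀ) *ᵥ y) := by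
    have h := aux_dot_mul' Mᵀ y
    rwa [Matrix.transpose_transpose] at h
  rw [h1, hMMT]
  have h2 : y ⬝ᵥ ((1 - (1 - L⁻¹) * (1 - L⁻¹)ᵀ) *ᵥ y) =
      y ⬝ᵥ y - ((1 - L⁻¹)ᵀ *ᵥ y) ⬝ᵥ ((1 - L⁻¹)ᵀ *ᵥ y) := by
    rw [Matrix.sub_mulVec, Matrix.one_mulVec, dotProduct_sub]
    congr 1
    have h := aux_dot_mul' (1 - L⁻¹)ᵀ y
    rwa [Matrix.transpose_transpose, eq_comm] at h
  rw [h2]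
  have := aux_dot_self_nonneg' ((1 - L⁻¹)ᵀ *ᵥ y)
  linarith
end

/-- Contraction estimate for one full Kaczmarz cycle: the error contracts by the
factor 1 − (det A)²/∏‖Aᵀe_i‖², equivalently the cycle matrix Q = Q_N⋯Q_1
satisfies ‖Q v‖² ≤ (1 − (det A)²/∏‖Aᵀe_i‖²)‖v‖² for all v. -/
theorem kaczmarz_cycle_contraction {N : ℕ} (A : Matrix (Fin N) (Fin N) ℝ)
    (hA : IsUnit A) (hrows : ∀ j : Fin N, Aᵀ *ᵥ Pi.single j 1 ≠ 0)
    (b x : Fin N → ℝ) (hx : x = A⁻¹ *ᵥ b)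
    (xn : Fin N → ℝ) (p : ℕ → Fin N → ℝ) (hp0 : p 0 = xn)
    (hstep : ∀ i : Fin N, p (i + 1) = p i +
      (((b - A *ᵥ p i) ⬝ᵥ Pi.single i 1) /
        ((Aᵀ *ᵥ Pi.single i 1) ⬝ᵥ (Aᵀ *ᵥ Pi.single i 1))) • (Aᵀ *ᵥ Pi.single i 1))
    (xn1 : Fin N → ℝ) (hxn1 : xn1 = p N)
    (Q : Matrix (Fin N) (Fin N) ℝ)
    (hQ : Q = (List.ofFn (fun i : Fin N =>
      (1 : Matrix (Fin N) (Fin N) ℝ) -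
        (((Aᵀ *ᵥ Pi.single i 1) ⬝ᵥ (Aᵀ *ᵥ Pi.single i 1))⁻¹) •
          vecMulVec (Aᵀ *ᵥ Pi.single i 1) (Aᵀ *ᵥ Pi.single i 1))).reverse.prod) :
    (x - xn1) ⬝ᵥ (x - xn1) ≤
      (1 - (A.det ^ 2) /
        ∏ i : Fin N, (Aᵀ *ᵥ Pi.single i 1) ⬝ᵥ (Aᵀ *ᵥ Pi.single i 1)) *
        ((x - xn) ⬝ᵥ (x - xn)) ∧
    ∀ v : Fin N → ℝ, (Q *ᵥ v) ⬝ᵥ (Q *ᵥ v) ≤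
      (1 - (A.det ^ 2) /
        ∏ i : Fin N, (Aᵀ *ᵥ Pi.single i 1) ⬝ᵥ (Aᵀ *ᵥ Pi.single i 1)) *
        (v ⬝ᵥ v) := by
  classical
  have hAdet : IsUnit A.det := (Matrix.isUnit_iff_isUnit_det A).1 hA
  set a : Fin N → Fin N → ℝ := fun i => Aᵀ *ᵥ Pi.single i 1 with ha
  set nn : Fin N → ℝ := fun i => a i ⬝ᵥ a i with hnn
  have hnpos : ∀ i, 0 < nn i := fun i => aux_dot_self_pos _ (hrows i)
  set u : Fin N → Fin N → ℝ := fun i => (Real.sqrt (nn i))⁻¹ • a i with hudef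
  have hss : ∀ i, (Real.sqrt (nn i))⁻¹ * (Real.sqrt (nn i))⁻¹ = (nn i)⁻¹ := by
    intro i
    rw [← mul_inv, Real.mul_self_sqrt (hnpos i).le]
  have hu : ∀ i, u i ⬝ᵥ u i = 1 := by
    intro i
    show ((Real.sqrt (nn i))⁻¹ • a i) ⬝ᵥ ((Real.sqrt (nn i))⁻¹ • a i) = 1
    rw [smul_dotProduct, dotProduct_smul, smul_eq_mul, smul_eq_mul, ← mul_assoc, hss i]
    exact inv_mul_cancel₀ (hnpos i).ne'
  set Qf : Fin N → Matrix (Fin N) (Fin N) ℝ := fun i => 1 - vecMulVec (u i) (u i) with hQf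
  have hQfeq : ∀ i, Qf i = 1 - (nn i)⁻¹ • vecMulVec (a i) (a i) := by
    intro i
    show (1 : Matrix (Fin N) (Fin N) ℝ) - vecMulVec (u i) (u i) = _
    congr 1
    ext k l
    simp only [vecMulVec_apply, Matrix.smul_apply, smul_eq_mul]
    show ((Real.sqrt (nn i))⁻¹ • a i) k * ((Real.sqrt (nn i))⁻¹ • a i) l = _
    simp only [Pi.smul_apply, smul_eq_mul]
    rw [← hss i]; ring
  set f : ℕ → Matrix (Fin N) (Fin N) ℝ := fun k => if h : k < N then Qf ⟨k, h⟩ else 1 with hf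
  set R : ℕ → Matrix (Fin N) (Fin N) ℝ :=
    fun k => (List.ofFn (fun i : Fin k => f (i : ℕ))).reverse.prod with hR
  have hR0 : R 0 = 1 := by simp [hR]
  have hRstep : ∀ k, R (k + 1) = f k * R k := by
    intro k
    show (List.ofFn (fun i : Fin (k + 1) => f (i : ℕ))).reverse.prod = _
    rw [List.ofFn_succ', List.concat_eq_append, List.reverse_append,
      List.reverse_singleton, List.singleton_append, List.prod_cons]
    rfl
  have hQR : Q = R N := by
    rw [hQ]
    have hfun : (fun i : Fin N =>
        (1 : Matrix (Fin N) (Fin N) ℝ) -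
          (((Aᵀ *ᵥ Pi.single i 1) ⬝ᵥ (Aᵀ *ᵥ Pi.single i 1))⁻¹) •
            vecMulVec (Aᵀ *ᵥ Pi.single i 1) (Aᵀ *ᵥ Pi.single i 1)) =
        fun i : Fin N => f (i : ℕ) := by
      funext i
      show _ = f (i : ℕ)
      rw [hf]
      simp only [dif_pos i.isLt, Fin.eta]
      rw [hQfeq i]
    rw [hfun]
  -- spectral machinery
  obtain ⟨L, Bm, M, hLdef, hBdef, hMdef, hLunit, hdetM, hMt⟩ := aux_L_props u hu
  have hMle := aux_op_le M hMt
  have hBmv : ∀ (w : Fin N → ℝ) (i : Fin N), (Bm *ᵥ w) i = u i ⬝ᵥ w := by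
    intro w i
    rw [hBdef]
    rfl
  have haA : ∀ i j, a i j = A i j := by
    intro i j
    show (Aᵀ *ᵥ Pi.single i 1) j = A i j
    rw [Matrix.mulVec_single]
    simp
  have hdetB : Bm.det ^ 2 * (∏ i, nn i) = A.det ^ 2 := by
    have hdiag : Bm = Matrix.diagonal (fun i => (Real.sqrt (nn i))⁻¹) * A := by
      rw [hBdef]
      ext i j
      rw [Matrix.diagonal_mul]
      show u i j = _
      show ((Real.sqrt (nn i))⁻¹ • a i) j = _
      simp only [Pi.smul_apply, smul_eq_mul]
      rw [haA]
    have h1 : (∏ i, (Real.sqrt (nn i))⁻¹) ^ 2 = (∏ i, nn i)⁻¹ := by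
      rw [← Finset.prod_pow, ← Finset.prod_inv_distrib]
      refine Finset.prod_congr rfl fun i _ => ?_
      rw [sq, hss i]
    rw [hdiag, Matrix.det_mul, Matrix.det_diagonal, mul_pow, h1]
    have hne : (∏ i, nn i) ≠ 0 := (Finset.prod_pos fun i _ => hnpos i).ne'
    rw [mul_comm ((∏ i, nn i)⁻¹) (A.det ^ 2), mul_assoc, inv_mul_cancel₀ hne, mul_one]
  have hprodpos : 0 < ∏ i, nn i := Finset.prod_pos fun i _ => hnpos i
  have hd : A.det ^ 2 / (∏ i, nn i) = Bm.det ^ 2 := by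
    rw [← hdetB]
    field_simp
  -- main estimate for the cycle matrix
  have main2 : ∀ v : Fin N → ℝ, (R N *ᵥ v) ⬝ᵥ (R N *ᵥ v) ≤
      (1 - A.det ^ 2 / ∏ i, nn i) * (v ⬝ᵥ v) := by
    intro v
    set c : ℕ → ℝ := fun k => if h : k < N then u ⟨k, h⟩ ⬝ᵥ (R k *ᵥ v) else 0 with hc
    set uext : ℕ → Fin N → ℝ := fun k => if h : k < N then u ⟨k, h⟩ else 0 with huext
    have hRsucc : ∀ k, k < N → R (k + 1) *ᵥ v = (R k *ᵥ v) - c k • uext k := by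
      intro k hk
      rw [hRstep k, ← Matrix.mulVec_mulVec]
      simp only [hf, dif_pos hk, hQf]
      rw [(aux_proj (u ⟨k, hk⟩) (hu _) (R k *ᵥ v)).1]
      simp only [hc, huext, dif_pos hk]
    have hnorm : ∀ k, k ≤ N →
        (R k *ᵥ v) ⬝ᵥ (R k *ᵥ v) = v ⬝ᵥ v - ∑ i ∈ Finset.range k, c i ^ 2 := by
      intro k
      induction k with
      | zero => intro _; simp [hR0, Matrix.one_mulVec]
      | succ k ih =>
        intro hk1
        have hk : k < N := hk1
        rw [hRstep k, ← Matrix.mulVec_mulVec]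
        simp only [hf, dif_pos hk, hQf]
        rw [(aux_proj (u ⟨k, hk⟩) (hu _) (R k *ᵥ v)).2, ih (le_of_lt hk),
          Finset.sum_range_succ]
        have hck : c k = u ⟨k, hk⟩ ⬝ᵥ (R k *ᵥ v) := by simp only [hc, dif_pos hk]
        rw [hck]
        ring
    have hexp : ∀ k, k ≤ N →
        R k *ᵥ v = v - ∑ i ∈ Finset.range k, c i • uext i := by
      intro k
      induction k with
      | zero => intro _; simp [hR0, Matrix.one_mulVec]
      | succ k ih =>
        intro hk1
        have hk : k < N := hk1
        rw [hRsucc k hk, ih (le_of_lt hk), Finset.sum_range_succ, sub_sub]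
    set cf : Fin N → ℝ := fun i => c (i : ℕ) with hcf
    have hcfi : ∀ i : Fin N, cf i = u i ⬝ᵥ (R (i : ℕ) *ᵥ v) := by
      intro i
      simp only [hcf, hc, dif_pos i.isLt, Fin.eta]
    have hLc : L *ᵥ cf = Bm *ᵥ v := by
      funext i
      have hv : v = (R (i : ℕ) *ᵥ v) + ∑ j ∈ Finset.range (i : ℕ), c j • uext j := by
        rw [hexp (i : ℕ) (le_of_lt i.isLt), sub_add_cancel]
      have hui_v : u i ⬝ᵥ v = cf i + ∑ j ∈ Finset.range (i : ℕ), c j * (u i ⬝ᵥ uext j) := by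
        conv_lhs => rw [hv]
        rw [dotProduct_add, aux_dot_sum, hcfi i]
        congr 1
        refine Finset.sum_congr rfl fun j hj => ?_
        rw [dotProduct_smul, smul_eq_mul]
      set g : ℕ → ℝ := fun k =>
        if k < (i : ℕ) then c k * (u i ⬝ᵥ uext k) else if k = (i : ℕ) then cf i else 0 with hg
      have hterm : ∀ j : Fin N, L i j * cf j = g (j : ℕ) := by
        intro j
        rw [hLdef, hg]
        simp only [Matrix.of_apply]
        by_cases h1 : (j : ℕ) < (i : ℕ)
        · rw [if_pos h1, if_pos h1]
          have huj : uext (j : ℕ) = u j := by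
            simp only [huext, dif_pos j.isLt, Fin.eta]
          rw [huj]
          show (u i ⬝ᵥ u j) * cf j = c (j : ℕ) * (u i ⬝ᵥ u j)
          rw [hcf]
          ring
        · by_cases h2 : j = i
          · subst h2
            rw [if_neg h1, if_pos rfl, if_neg h1, if_pos rfl, one_mul]
          · have h3 : (j : ℕ) ≠ (i : ℕ) := fun h => h2 (Fin.ext h)
            rw [if_neg h1, if_neg h2, if_neg h1, if_neg h3, zero_mul]
      have hsum1 : (L *ᵥ cf) i = ∑ j : Fin N, L i j * cf j := rfl
      have hsum2 : ∑ j : Fin N, L i j * cf j = ∑ k ∈ Finset.range N, g k := by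
        rw [← Fin.sum_univ_eq_sum_range g N]
        exact Finset.sum_congr rfl fun j _ => hterm j
      have hsum3 : ∑ k ∈ Finset.range N, g k = ∑ k ∈ Finset.range ((i : ℕ) + 1), g k := by
        symm
        refine Finset.sum_subset (Finset.range_subset_range.2 i.isLt) fun k _ hk => ?_
        have hk1 : ¬ k < (i : ℕ) + 1 := fun h => hk (Finset.mem_range.2 h)
        rw [hg]
        simp only
        rw [if_neg (by omega), if_neg (by omega)]
      have hsum4 : ∑ k ∈ Finset.range ((i : ℕ) + 1), g k =
          (∑ k ∈ Finset.range (i : ℕ), c k * (u i ⬝ᵥ uext k)) + cf i := by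
        rw [Finset.sum_range_succ]
        congr 1
        · refine Finset.sum_congr rfl fun k hk => ?_
          rw [hg]
          simp only
          rw [if_pos (Finset.mem_range.1 hk)]
        · rw [hg]
          simp
      rw [hBmv v i, hui_v, hsum1, hsum2, hsum3, hsum4]
      ring
    have hcM : cf = M *ᵥ v := by
      rw [hMdef, ← Matrix.mulVec_mulVec, ← hLc, Matrix.mulVec_mulVec,
        Matrix.nonsing_inv_mul L hLunit, Matrix.one_mulVec]
    have hsumsq : ∑ k ∈ Finset.range N, c k ^ 2 = cf ⬝ᵥ cf := by
      rw [show cf ⬝ᵥ cf = ∑ j : Fin N, cf j * cf j from rfl,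
        ← Fin.sum_univ_eq_sum_range (fun k => c k ^ 2) N]
      refine Finset.sum_congr rfl fun j _ => ?_
      rw [hcf]; ring
    have hlow := aux_spectral M hMle v
    rw [hdetM, ← hcM] at hlow
    rw [hnorm N le_rfl, hsumsq, hd]
    have hexp2 : (1 - Bm.det ^ 2) * (v ⬝ᵥ v) = v ⬝ᵥ v - Bm.det ^ 2 * (v ⬝ᵥ v) := by ring
    rw [hexp2]
    linarith [hlow]
  -- error recursion
  have hAx : A *ᵥ x = b := by
    rw [hx, Matrix.mulVec_mulVec, Matrix.mul_nonsing_inv A hAdet, Matrix.one_mulVec]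
  have hadot : ∀ (i : Fin N) (w : Fin N → ℝ), a i ⬝ᵥ w = (A *ᵥ w) i := by
    intro i w
    show (Aᵀ *ᵥ Pi.single i 1) ⬝ᵥ w = _
    rw [Matrix.mulVec_single]
    simp [dotProduct, Matrix.mulVec, Matrix.transpose_apply]
  have hscale : ∀ (i : Fin N) (w : Fin N → ℝ),
      (u i ⬝ᵥ w) • u i = ((a i ⬝ᵥ w) / nn i) • a i := by
    intro i w
    show (((Real.sqrt (nn i))⁻¹ • a i) ⬝ᵥ w) • ((Real.sqrt (nn i))⁻¹ • a i) = _
    rw [smul_dotProduct, smul_eq_mul, smul_smul]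
    congr 1
    rw [div_eq_mul_inv, ← hss i]
    ring
  have herr : ∀ k, (hk : k < N) → x - p (k + 1) = f k *ᵥ (x - p k) := by
    intro k hk
    have hs : p (k + 1) = p k +
        (((b - A *ᵥ p k) ⬝ᵥ Pi.single (⟨k, hk⟩ : Fin N) 1) / nn ⟨k, hk⟩) • a ⟨k, hk⟩ :=
      hstep ⟨k, hk⟩
    have hres : (b - A *ᵥ p k) ⬝ᵥ Pi.single (⟨k, hk⟩ : Fin N) 1 =
        a ⟨k, hk⟩ ⬝ᵥ (x - p k) := by
      rw [← hAx, ← Matrix.mulVec_sub, dotProduct_single, mul_one, hadot]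
    simp only [hf, dif_pos hk, hQf]
    rw [(aux_proj (u ⟨k, hk⟩) (hu _) (x - p k)).1, hscale, hs, hres]
    funext j
    simp only [Pi.sub_apply, Pi.add_apply, Pi.smul_apply, smul_eq_mul]
    ring
  have hxp : ∀ k, k ≤ N → x - p k = R k *ᵥ (x - xn) := by
    intro k
    induction k with
    | zero => intro _; rw [hp0, hR0, Matrix.one_mulVec]
    | succ k ih =>
      intro hk1
      have hk : k < N := hk1
      rw [herr k hk, ih (le_of_lt hk), Matrix.mulVec_mulVec, ← hRstep k]
  constructor
  · rw [hxn1, hxp N le_rfl]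
    exact main2 (x - xn)
  · intro v
    rw [hQR]
    exact main2 v
end
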